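/- arXiv:1706.03120 — 3 statements merged into one kernel-verified Lean document; each statement's English description precedes it below -/
import Mathlib

section
/- For every integer e > 1, σ(e)/e ≤ exp(2ω(e)/P⁻(e)), where ω(e) is the number of distinct prime factors of e and P⁻(e) its least prime factor. -/
lemma aux_sigma_pp (p i : ℕ) (hp : p.Prime) :
    (ArithmeticFunction.sigma 1 (p ^ i) : ℝ) / (p : ℝ) ^ i ≤ Real.exp (2 / p) := by
  have hp2 : (2 : ℝ) ≤ p := by exact_mod_cast hp.two_le
  have h1 : (p : ℝ) ≠ 1 := by linarith
  have hpow : (0 : ℝ) < (p : ℝ) ^ i := by positivity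
  rw [ArithmeticFunction.sigma_one_apply_prime_pow hp]
  push_cast
  rw [geom_sum_eq h1]
  have hstep : ((p : ℝ) ^ (i + 1) - 1) / ((p : ℝ) - 1) / (p : ℝ) ^ i ≤ 1 + 2 / p := by
    rw [div_div, div_le_iff₀ (by nlinarith)]
    have h2p : 2 / (p : ℝ) ≤ 1 := by
      rw [div_le_one (by linarith)]; linarith
    have hppow : (p : ℝ) ^ (i + 1) = p * p ^ i := by ring
    have key : (p : ℝ) ≤ (1 + 2 / p) * (p - 1) := by
      have hppos : (0 : ℝ) < p := by linarith
      rw [show (1 + 2 / (p:ℝ)) * (p - 1) = (p + 2) * (p - 1) / p by field_simp,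
        le_div_iff₀ hppos]
      nlinarith
    nlinarith [mul_le_mul_of_nonneg_right key hpow.le]
  calc ((p : ℝ) ^ (i + 1) - 1) / ((p : ℝ) - 1) / (p : ℝ) ^ i ≤ 1 + 2 / p := hstep
    _ ≤ Real.exp (2 / p) := by
        have := Real.add_one_le_exp (2 / (p : ℝ)); linarith

theorem stmt_3 (e : ℕ) (he : 1 < e) :
    (ArithmeticFunction.sigma 1 e : ℝ) / e ≤
      Real.exp (2 * e.primeFactors.card / e.minFac) := by
  have h0 : e ≠ 0 := by omega
  have hfact : (ArithmeticFunction.sigma 1 e : ℝ) =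
      ∏ p ∈ e.primeFactors, (ArithmeticFunction.sigma 1 (p ^ e.factorization p) : ℝ) := by
    rw [ArithmeticFunction.isMultiplicative_sigma.multiplicative_factorization _ h0]
    push_cast
    rfl
  have hee : (e : ℝ) = ∏ p ∈ e.primeFactors, (p : ℝ) ^ e.factorization p := by
    conv_lhs => rw [← Nat.factorization_prod_pow_eq_self h0]
    push_cast
    rfl
  have hmf : 0 < e.minFac := Nat.minFac_pos e
  rw [hfact, hee, ← Finset.prod_div_distrib]
  calc (∏ p ∈ e.primeFactors,
          (ArithmeticFunction.sigma 1 (p ^ e.factorization p) : ℝ) / (p : ℝ) ^ e.factorization p)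
      ≤ ∏ p ∈ e.primeFactors, Real.exp (2 / p) := by
        apply Finset.prod_le_prod
        · intro p hp; positivity
        · intro p hp
          exact aux_sigma_pp p _ (Nat.prime_of_mem_primeFactors hp)
    _ = Real.exp (∑ p ∈ e.primeFactors, 2 / (p : ℝ)) := by rw [Real.exp_sum]
    _ ≤ Real.exp (2 * e.primeFactors.card / e.minFac) := by
        apply Real.exp_le_exp.2
        have : ∀ p ∈ e.primeFactors, 2 / (p : ℝ) ≤ 2 / e.minFac := by
          intro p hp
          have hpp := Nat.prime_of_mem_primeFactors hp
          have hle : e.minFac ≤ p :=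
            Nat.minFac_le_of_dvd hpp.two_le (Nat.dvd_of_mem_primeFactors hp)
          apply div_le_div_of_nonneg_left (by norm_num) (by exact_mod_cast hmf)
          exact_mod_cast hle
        calc ∑ p ∈ e.primeFactors, 2 / (p : ℝ)
            ≤ ∑ _p ∈ e.primeFactors, 2 / (e.minFac : ℝ) := Finset.sum_le_sum this
          _ = e.primeFactors.card * (2 / e.minFac) := by rw [Finset.sum_const, nsmul_eq_mul]
          _ = 2 * e.primeFactors.card / e.minFac := by ring
end

section
/- Let n₀ be a positive integer with s(n₀) > 0, and let p, q be distinct primes not dividing n₀. Then s(n₀)·s(n₀·p·q) = (s(n₀)·p + σ(n₀))·(s(n₀)·q + σ(n₀)) + s(n₀)·σ(n₀) − σ(n₀)², as an identity of integers. -/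
def s (n : ℕ) : ℕ := ArithmeticFunction.sigma 1 n - n

theorem stmt_7 (n₀ p q : ℕ) (hn₀ : 0 < n₀) (hs : 0 < s n₀)
    (hp : p.Prime) (hq : q.Prime) (hpq : p ≠ q)
    (hpn : ¬ p ∣ n₀) (hqn : ¬ q ∣ n₀) :
    (s n₀ : ℤ) * s (n₀ * p * q)
      = ((s n₀ : ℤ) * p + ArithmeticFunction.sigma 1 n₀)
          * ((s n₀ : ℤ) * q + ArithmeticFunction.sigma 1 n₀)
        + (s n₀ : ℤ) * ArithmeticFunction.sigma 1 n₀
        - (ArithmeticFunction.sigma 1 n₀ : ℤ) ^ 2 := by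
  have hσp : ArithmeticFunction.sigma 1 p = p + 1 := by
    have := ArithmeticFunction.sigma_one_apply_prime_pow (i := 1) hp
    simpa [Finset.sum_range_succ, add_comm] using this
  have hσq : ArithmeticFunction.sigma 1 q = q + 1 := by
    have := ArithmeticFunction.sigma_one_apply_prime_pow (i := 1) hq
    simpa [Finset.sum_range_succ, add_comm] using this
  have hc1 : Nat.Coprime n₀ p := (hp.coprime_iff_not_dvd.mpr hpn).symm
  have hc2 : Nat.Coprime (n₀ * p) q :=
    Nat.Coprime.mul ((hq.coprime_iff_not_dvd.mpr hqn).symm)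
      ((Nat.coprime_primes hp hq).mpr hpq)
  have hmul : ArithmeticFunction.sigma 1 (n₀ * p * q)
      = ArithmeticFunction.sigma 1 n₀ * (p + 1) * (q + 1) := by
    rw [ArithmeticFunction.isMultiplicative_sigma.map_mul_of_coprime hc2,
        ArithmeticFunction.isMultiplicative_sigma.map_mul_of_coprime hc1, hσp, hσq]
  have hσn : n₀ ≤ ArithmeticFunction.sigma 1 n₀ := by
    rw [ArithmeticFunction.sigma_one_apply]
    exact Finset.single_le_sum (fun i _ => Nat.zero_le i) (Nat.mem_divisors_self n₀ hn₀.ne')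
  have hσN : n₀ * p * q ≤ ArithmeticFunction.sigma 1 (n₀ * p * q) := by
    rw [ArithmeticFunction.sigma_one_apply]
    exact Finset.single_le_sum (fun i _ => Nat.zero_le i) (Nat.mem_divisors_self _ (Nat.mul_pos (Nat.mul_pos hn₀ hp.pos) hq.pos).ne')
  have e1 : (s n₀ : ℤ) = (ArithmeticFunction.sigma 1 n₀ : ℤ) - n₀ := by
    simp [s, Nat.cast_sub hσn]
  have e2 : (s (n₀ * p * q) : ℤ)
      = (ArithmeticFunction.sigma 1 n₀ : ℤ) * (p + 1) * (q + 1) - n₀ * p * q := by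
    rw [s, hmul, Nat.cast_sub (hmul ▸ hσN)]; push_cast; ring
  rw [e1, e2]
  ring
end

section
/- For any real x ≥ 1 and y ≥ 1, the number of positive integers n ≤ x whose squarefull part exceeds y is O(x/√y), with an absolute implied constant. -/
/-- The squarefull part of `n`: the largest squarefull divisor of `n`. -/
def squarefullPart (n : ℕ) : ℕ :=
  ∏ p ∈ n.primeFactors.filter (fun p => p ^ 2 ∣ n), p ^ n.factorization p

private def sfA (n : ℕ) : ℕ :=
  ∏ p ∈ n.primeFactors.filter (fun p => p ^ 2 ∣ n),
    p ^ ((n.factorization p - 3 * (n.factorization p % 2)) / 2)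

private def sfB (n : ℕ) : ℕ :=
  ∏ p ∈ (n.primeFactors.filter (fun p => p ^ 2 ∣ n)).filter
      (fun p => n.factorization p % 2 = 1), p

private lemma sfAB_eq (n : ℕ) (hn : n ≠ 0) :
    sfA n ^ 2 * sfB n ^ 3 = squarefullPart n := by
  unfold sfA sfB squarefullPart
  rw [← Finset.prod_pow, ← Finset.prod_pow]
  rw [Finset.prod_filter (fun p => n.factorization p % 2 = 1) (fun x => x ^ 3),
    ← Finset.prod_mul_distrib]
  refine Finset.prod_congr rfl fun p hp => ?_
  simp only [Finset.mem_filter, Nat.mem_primeFactors] at hp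
  obtain ⟨⟨pp, -, -⟩, hp2⟩ := hp
  have he : 2 ≤ n.factorization p := by
    rwa [← pp.pow_dvd_iff_le_factorization hn]
  set e := n.factorization p
  split_ifs with h
  · rw [← pow_mul, ← pow_add]
    congr 1
    omega
  · rw [← pow_mul, mul_one]
    congr 1
    omega

private lemma squarefullPart_dvd (n : ℕ) (hn : n ≠ 0) : squarefullPart n ∣ n := by
  have h : ∏ p ∈ n.primeFactors, p ^ n.factorization p = n := by
    rw [← Nat.support_factorization, ← Finsupp.prod]
    exact Nat.factorization_prod_pow_eq_self hn
  calc squarefullPart n ∣ ∏ p ∈ n.primeFactors, p ^ n.factorization p :=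
        Finset.prod_dvd_prod_of_subset _ _ _ (Finset.filter_subset _ _)
    _ = n := h


private lemma sum_inv_sq_le (m : ℕ) (hm : 1 ≤ m) (X : ℕ) :
    ∑ a ∈ Finset.Icc m X, (1:ℝ) / (a:ℝ) ^ 2 ≤ 2 / m := by
  have hm0 : (0:ℝ) < m := by exact_mod_cast hm
  have key : ∀ Y : ℕ, ∑ a ∈ Finset.Icc (m+1) Y, (1:ℝ) / (a:ℝ) ^ 2
      ≤ 1 / m - 1 / (max m Y) := by
    intro Y
    induction Y with
    | zero => simp [Nat.lt_irrefl]
    | succ Y ih =>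
      rcases lt_or_ge Y m with h | h
      · rcases lt_or_ge (Y+1) (m+1) with h2 | h2
        · rw [Finset.Icc_eq_empty (by omega)]
          simp [max_eq_left (by omega : Y + 1 ≤ m)]
        · have hy : Y + 1 = m := by omega
          rw [hy]
          simp
      · have h1 : m + 1 ≤ Y + 1 := by omega
        rw [Finset.sum_Icc_succ_top h1]
        have hYm : max m Y = Y := max_eq_right h
        have hYm1 : max m (Y+1) = Y+1 := max_eq_right (by omega)
        rw [hYm] at ih
        rw [hYm1]
        have hY0 : (0:ℝ) < Y := by exact_mod_cast (by omega : 0 < Y)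
        have step : (1:ℝ) / ((Y:ℝ)+1)^2 ≤ 1 / Y - 1 / (Y+1) := by
          rw [div_sub_div _ _ (ne_of_gt hY0) (by positivity)]
          rw [div_le_div_iff₀ (by positivity) (by positivity)]
          ring_nf
          nlinarith [hY0]
        push_cast
        -- (casts already aligned)
        linarith
  rcases lt_or_ge X m with h | h
  · rw [Finset.Icc_eq_empty (by omega)]
    simp
    positivity
  · have : Finset.Icc m X = insert m (Finset.Icc (m+1) X) := by
      rw [Finset.Icc_add_one_left_eq_Ioc, Finset.Ioc_insert_left h]
    rw [this, Finset.sum_insert (by simp)]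
    have := key X
    have h1 : (1:ℝ) / (m:ℝ)^2 ≤ 1 / m := by
      rw [div_le_div_iff₀ (by positivity) hm0]
      have : (1:ℝ) ≤ m := by exact_mod_cast hm
      nlinarith
    have h2 : (0:ℝ) ≤ 1 / (max m X : ℕ) := by positivity
    have : (2:ℝ)/m = 1/m + 1/m := by ring
    rw [this]
    linarith

private lemma sum_inv_bsqrtb_le (X : ℕ) :
    ∑ b ∈ Finset.Icc 1 X, (1:ℝ) / ((b:ℝ) * Real.sqrt b) ≤ 3 := by
  have key : ∀ Y : ℕ, ∑ b ∈ Finset.Icc 2 Y, (1:ℝ) / ((b:ℝ) * Real.sqrt b)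
      ≤ 2 * (1 - 1 / Real.sqrt ((max 1 Y : ℕ))) := by
    intro Y
    induction Y with
    | zero => simp
    | succ Y ih =>
      rcases lt_or_ge Y 1 with h | h
      · interval_cases Y
        · simp
      · have h1 : 2 ≤ Y + 1 := by omega
        rw [Finset.sum_Icc_succ_top h1]
        have hYm : max 1 Y = Y := max_eq_right h
        have hYm1 : max 1 (Y+1) = Y+1 := max_eq_right (by omega)
        rw [hYm] at ih
        rw [hYm1]
        have hY1 : (1:ℝ) ≤ (Y:ℝ) := by exact_mod_cast h
        set u := Real.sqrt Y with hu
        set v := Real.sqrt ((Y:ℝ)+1) with hv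
        have hu2 : u ^ 2 = Y := Real.sq_sqrt (by linarith)
        have hv2 : v ^ 2 = (Y:ℝ) + 1 := Real.sq_sqrt (by linarith)
        have hu1 : 1 ≤ u := by
          rw [hu, show (1:ℝ) = Real.sqrt 1 by simp]
          exact Real.sqrt_le_sqrt (by linarith)
        have huv : u ≤ v := Real.sqrt_le_sqrt (by linarith)
        have hv0 : 0 < v := by linarith
        have step : (1:ℝ) / (((Y:ℝ)+1) * v) ≤ 2 * (1/u - 1/v) := by
          rw [← hv2]
          have e1 : (1:ℝ)/u - 1/v = (v - u)/(u*v) := by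
            field_simp
          rw [e1]
          rw [div_le_iff₀ (by positivity)]
          have hvu : (v - u) * (v + u) = 1 := by nlinarith
          have hvu' : 0 < v + u := by linarith
          have hvu0 : 0 ≤ v - u := by linarith
          have heq : 2 * ((v - u) / (u * v)) * (v ^ 2 * v) = 2 * (v - u) * v ^ 2 / u := by
            field_simp
          rw [heq, le_div_iff₀ (by positivity)]
          have h3 : u * (v + u) ≤ 2 * v ^ 2 := by nlinarith
          calc 1 * u = (v - u) * (u * (v + u)) := by rw [← hvu]; ring
            _ ≤ (v - u) * (2 * v ^ 2) := mul_le_mul_of_nonneg_left h3 hvu0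
            _ = 2 * (v - u) * v ^ 2 := by ring
        push_cast
        -- (casts already aligned)
        linarith
  rcases lt_or_ge X 1 with h | h
  · interval_cases X
    simp
  · have : Finset.Icc 1 X = insert 1 (Finset.Icc 2 X) := by
      conv_rhs => rw [show (2:ℕ) = 1 + 1 from rfl, Finset.Icc_add_one_left_eq_Ioc]
      rw [Finset.Ioc_insert_left h]
    rw [this, Finset.sum_insert (by simp)]
    have := key X
    have h2 : (0:ℝ) ≤ 1 / Real.sqrt (max 1 X : ℕ) := by positivity
    simp only [Nat.cast_one, Real.sqrt_one, mul_one, one_div] at *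
    linarith

private lemma inner_bound (X : ℕ) (y : ℝ) (hy : 1 ≤ y) (b : ℕ) (hb : 1 ≤ b) :
    ∑ a ∈ Finset.Icc 1 X, (if y < ((a:ℝ)^2 * (b:ℝ)^3) then (1:ℝ)/((a:ℝ)^2*(b:ℝ)^3) else 0)
      ≤ 2 / (Real.sqrt y * ((b:ℝ) * Real.sqrt b)) := by
  have hB : (1:ℝ) ≤ (b:ℝ) := by exact_mod_cast hb
  have hB0 : (0:ℝ) < (b:ℝ) := by linarith
  have hB3 : (0:ℝ) < (b:ℝ)^3 := by positivity
  have hy0 : (0:ℝ) < y := by linarith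
  have hsB : Real.sqrt ((b:ℝ)^3) = (b:ℝ) * Real.sqrt b := by
    rw [show ((b:ℝ))^3 = (b:ℝ)^2 * b by ring, Real.sqrt_mul (by positivity),
      Real.sqrt_sq (le_of_lt hB0)]
  have hsB0 : 0 < (b:ℝ) * Real.sqrt b := by
    have := Real.sqrt_pos.mpr hB0
    positivity
  -- rewrite terms as (1/a^2) * (1/b^3)
  have hterm : ∀ a : ℕ, (if y < ((a:ℝ)^2 * (b:ℝ)^3) then (1:ℝ)/((a:ℝ)^2*(b:ℝ)^3) else 0)
      = (if y < ((a:ℝ)^2 * (b:ℝ)^3) then (1:ℝ)/(a:ℝ)^2 else 0) * (1/(b:ℝ)^3) := by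
    intro a
    split_ifs with h
    · rw [div_mul_div_comm, one_mul]
    · rw [zero_mul]
  simp only [hterm]
  rw [← Finset.sum_mul]
  rcases le_or_gt ((b:ℝ)^3) y with hc | hc
  · -- b^3 ≤ y : tail sum
    set t := Real.sqrt (y / (b:ℝ)^3) with htdef
    have ht2 : t^2 = y / (b:ℝ)^3 := Real.sq_sqrt (by positivity)
    have ht1 : 1 ≤ t := by
      rw [htdef, show (1:ℝ) = Real.sqrt 1 by simp]
      exact Real.sqrt_le_sqrt ((one_le_div hB3).mpr hc)
    have ht0 : 0 < t := by linarith
    set m := ⌊t⌋₊ + 1 with hmdef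
    have hm1 : 1 ≤ m := by omega
    have htm : t ≤ (m:ℝ) := by
      push_cast
      exact le_of_lt (by rw [hmdef]; push_cast; exact Nat.lt_floor_add_one t)
    have hsub : ∑ a ∈ Finset.Icc 1 X, (if y < ((a:ℝ)^2 * (b:ℝ)^3) then (1:ℝ)/(a:ℝ)^2 else 0)
        ≤ ∑ a ∈ Finset.Icc m X, (1:ℝ)/(a:ℝ)^2 := by
      rw [← Finset.sum_filter]
      apply Finset.sum_le_sum_of_subset_of_nonneg
      · intro a ha
        simp only [Finset.mem_filter, Finset.mem_Icc] at ha ⊢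
        obtain ⟨⟨ha1, ha2⟩, hcond⟩ := ha
        refine ⟨?_, ha2⟩
        have ha0 : (0:ℝ) < (a:ℝ) := by exact_mod_cast ha1
        have : t < (a:ℝ) := by
          have h1 : y / (b:ℝ)^3 < (a:ℝ)^2 := (div_lt_iff₀ hB3).mpr hcond
          calc t = Real.sqrt (y / (b:ℝ)^3) := rfl
            _ < Real.sqrt ((a:ℝ)^2) := Real.sqrt_lt_sqrt (by positivity) h1
            _ = (a:ℝ) := Real.sqrt_sq (le_of_lt ha0)
        have : ⌊t⌋₊ < a := (Nat.floor_lt (le_of_lt ht0)).mpr this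
        omega
      · intro a _ _
        positivity
    have hsum2 : ∑ a ∈ Finset.Icc m X, (1:ℝ)/(a:ℝ)^2 ≤ 2 / t := by
      calc ∑ a ∈ Finset.Icc m X, (1:ℝ)/(a:ℝ)^2 ≤ 2 / m := sum_inv_sq_le m hm1 X
        _ ≤ 2 / t := by
          apply div_le_div_of_nonneg_left (by norm_num) ht0 htm
    have hts : t * Real.sqrt ((b:ℝ)^3) = Real.sqrt y := by
      rw [htdef, ← Real.sqrt_mul (by positivity)]
      congr 1
      field_simp
    have hkey : t * (b:ℝ)^3 = Real.sqrt y * ((b:ℝ) * Real.sqrt b) := by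
      calc t * (b:ℝ)^3
          = t * (Real.sqrt ((b:ℝ)^3) * Real.sqrt ((b:ℝ)^3)) := by
            rw [Real.mul_self_sqrt (le_of_lt hB3)]
        _ = (t * Real.sqrt ((b:ℝ)^3)) * Real.sqrt ((b:ℝ)^3) := by ring
        _ = Real.sqrt y * ((b:ℝ) * Real.sqrt b) := by rw [hts, hsB]
    calc (∑ a ∈ Finset.Icc 1 X, (if y < ((a:ℝ)^2 * (b:ℝ)^3) then (1:ℝ)/(a:ℝ)^2 else 0)) * (1/(b:ℝ)^3)
        ≤ (2/t) * (1/(b:ℝ)^3) := by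
          apply mul_le_mul_of_nonneg_right (le_trans hsub hsum2) (by positivity)
      _ = 2 / (t * (b:ℝ)^3) := by rw [div_mul_div_comm, mul_one]
      _ = 2 / (Real.sqrt y * ((b:ℝ) * Real.sqrt b)) := by rw [hkey]
  · -- y < b^3
    have hsum1 : ∑ a ∈ Finset.Icc 1 X, (if y < ((a:ℝ)^2 * (b:ℝ)^3) then (1:ℝ)/(a:ℝ)^2 else 0)
        ≤ 2 := by
      calc ∑ a ∈ Finset.Icc 1 X, (if y < ((a:ℝ)^2 * (b:ℝ)^3) then (1:ℝ)/(a:ℝ)^2 else 0)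
          ≤ ∑ a ∈ Finset.Icc 1 X, (1:ℝ)/(a:ℝ)^2 := by
            apply Finset.sum_le_sum
            intro a _
            split_ifs
            · exact le_refl _
            · positivity
        _ ≤ 2 / (1:ℕ) := sum_inv_sq_le 1 le_rfl X
        _ = 2 := by norm_num
    have hkey2 : Real.sqrt y * ((b:ℝ) * Real.sqrt b) ≤ (b:ℝ)^3 := by
      rw [← hsB]
      calc Real.sqrt y * Real.sqrt ((b:ℝ)^3)
          ≤ Real.sqrt ((b:ℝ)^3) * Real.sqrt ((b:ℝ)^3) :=
            mul_le_mul_of_nonneg_right (Real.sqrt_le_sqrt (le_of_lt hc)) (Real.sqrt_nonneg _)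
        _ = (b:ℝ)^3 := Real.mul_self_sqrt (le_of_lt hB3)
    calc (∑ a ∈ Finset.Icc 1 X, (if y < ((a:ℝ)^2 * (b:ℝ)^3) then (1:ℝ)/(a:ℝ)^2 else 0)) * (1/(b:ℝ)^3)
        ≤ 2 * (1/(b:ℝ)^3) := by
          apply mul_le_mul_of_nonneg_right hsum1 (by positivity)
      _ = 2 / (b:ℝ)^3 := by ring
      _ ≤ 2 / (Real.sqrt y * ((b:ℝ) * Real.sqrt b)) := by
          apply div_le_div_of_nonneg_left (by norm_num) _ hkey2
          positivity

theorem stmt_16 :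
    ∃ C : ℝ, 0 < C ∧ ∀ x y : ℝ, 1 ≤ x → 1 ≤ y →
      (((Finset.Icc 1 ⌊x⌋₊).filter fun n => (y : ℝ) < squarefullPart n).card : ℝ)
        ≤ C * x / Real.sqrt y := by
  refine ⟨6, by norm_num, fun x y hx hy => ?_⟩
  have hx0 : (0:ℝ) < x := by linarith
  have hy0 : (0:ℝ) < y := by linarith
  have hsy : 0 < Real.sqrt y := Real.sqrt_pos.mpr hy0
  set X := ⌊x⌋₊ with hXdef
  set S := (Finset.Icc 1 X).filter (fun n => (y:ℝ) < (squarefullPart n : ℝ)) with hS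
  set T := ((Finset.Icc 1 X) ×ˢ (Finset.Icc 1 X)).filter
      (fun q : ℕ × ℕ => y < ((q.1 ^ 2 * q.2 ^ 3 : ℕ) : ℝ)) with hT
  have hmap : ∀ n ∈ S, (sfA n, sfB n) ∈ T := by
    intro n hn
    simp only [hS, Finset.mem_filter, Finset.mem_Icc] at hn
    obtain ⟨⟨hn1, hn2⟩, hny⟩ := hn
    have hn0 : n ≠ 0 := by omega
    have hAB := sfAB_eq n hn0
    have hd : sfA n ^ 2 * sfB n ^ 3 ∣ n := hAB ▸ squarefullPart_dvd n hn0
    have hA : sfA n ∣ n :=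
      dvd_trans (dvd_trans (dvd_pow_self _ two_ne_zero) (dvd_mul_right _ _)) hd
    have hB : sfB n ∣ n :=
      dvd_trans (dvd_trans (dvd_pow_self _ three_ne_zero) (dvd_mul_left _ _)) hd
    have hA1 : 1 ≤ sfA n := Nat.pos_of_dvd_of_pos hA (by omega)
    have hB1 : 1 ≤ sfB n := Nat.pos_of_dvd_of_pos hB (by omega)
    simp only [hT, Finset.mem_filter, Finset.mem_product, Finset.mem_Icc]
    refine ⟨⟨⟨hA1, le_trans (Nat.le_of_dvd (by omega) hA) hn2⟩,
      ⟨hB1, le_trans (Nat.le_of_dvd (by omega) hB) hn2⟩⟩, ?_⟩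
    rw [hAB]
    exact hny
  have hfib : ∀ q ∈ T, ((S.filter (fun n => (sfA n, sfB n) = q)).card : ℝ)
      ≤ x * (1 / ((q.1:ℝ)^2 * (q.2:ℝ)^3)) := by
    intro q hq
    simp only [hT, Finset.mem_filter, Finset.mem_product, Finset.mem_Icc] at hq
    obtain ⟨⟨⟨hq1, -⟩, ⟨hq2, -⟩⟩, -⟩ := hq
    set m := q.1 ^ 2 * q.2 ^ 3 with hm
    have hm1 : 1 ≤ m := by
      have : 1 ≤ q.1 ^ 2 := Nat.one_le_pow _ _ hq1
      have : 1 ≤ q.2 ^ 3 := Nat.one_le_pow _ _ hq2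
      simp only [hm]
      nlinarith
    have hm0 : (0:ℝ) < (m:ℝ) := by exact_mod_cast hm1
    have hsubset : S.filter (fun n => (sfA n, sfB n) = q)
        ⊆ (Finset.Ioc 0 X).filter (fun n => m ∣ n) := by
      intro n hn
      simp only [hS, Finset.mem_filter, Finset.mem_Icc, Prod.mk.injEq] at hn
      obtain ⟨⟨⟨hn1, hn2⟩, hny⟩, hfq⟩ := hn
      have hn0 : n ≠ 0 := by omega
      have hd : sfA n ^ 2 * sfB n ^ 3 ∣ n := (sfAB_eq n hn0) ▸ squarefullPart_dvd n hn0
      simp only [Finset.mem_filter, Finset.mem_Ioc]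
      refine ⟨⟨by omega, hn2⟩, ?_⟩
      rw [hm, ← hfq]
      simpa using hd
    have hcard := Finset.card_le_card hsubset
    rw [Nat.Ioc_filter_dvd_card_eq_div] at hcard
    calc ((S.filter (fun n => (sfA n, sfB n) = q)).card : ℝ)
        ≤ ((X / m : ℕ) : ℝ) := by exact_mod_cast hcard
      _ ≤ (X:ℝ) / (m:ℝ) := Nat.cast_div_le
      _ ≤ x / (m:ℝ) := by
          gcongr
          exact Nat.floor_le (le_of_lt hx0)
      _ = x * (1 / ((q.1:ℝ)^2 * (q.2:ℝ)^3)) := by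
          rw [hm]
          push_cast
          ring
  have hsum : ∑ q ∈ T, (1:ℝ) / ((q.1:ℝ)^2 * (q.2:ℝ)^3) ≤ 6 / Real.sqrt y := by
    have e1 : ∑ q ∈ T, (1:ℝ) / ((q.1:ℝ)^2 * (q.2:ℝ)^3)
        = ∑ a ∈ Finset.Icc 1 X, ∑ b ∈ Finset.Icc 1 X,
            (if y < ((a:ℝ)^2 * (b:ℝ)^3) then (1:ℝ)/((a:ℝ)^2*(b:ℝ)^3) else 0) := by
      rw [hT, Finset.sum_filter, Finset.sum_product]
      push_cast
      rfl
    rw [e1, Finset.sum_comm]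
    calc ∑ b ∈ Finset.Icc 1 X, ∑ a ∈ Finset.Icc 1 X,
          (if y < ((a:ℝ)^2 * (b:ℝ)^3) then (1:ℝ)/((a:ℝ)^2*(b:ℝ)^3) else 0)
        ≤ ∑ b ∈ Finset.Icc 1 X, 2 / Real.sqrt y * (1/((b:ℝ) * Real.sqrt b)) := by
          apply Finset.sum_le_sum
          intro b hb
          simp only [Finset.mem_Icc] at hb
          calc ∑ a ∈ Finset.Icc 1 X,
                (if y < ((a:ℝ)^2 * (b:ℝ)^3) then (1:ℝ)/((a:ℝ)^2*(b:ℝ)^3) else 0)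
              ≤ 2 / (Real.sqrt y * ((b:ℝ) * Real.sqrt b)) := inner_bound X y hy b hb.1
            _ = 2 / Real.sqrt y * (1/((b:ℝ) * Real.sqrt b)) := by
                rw [div_mul_eq_div_div, div_eq_mul_one_div (2 / Real.sqrt y)]
      _ = 2 / Real.sqrt y * ∑ b ∈ Finset.Icc 1 X, (1:ℝ)/((b:ℝ) * Real.sqrt b) := by
          rw [Finset.mul_sum]
      _ ≤ 2 / Real.sqrt y * 3 :=
          mul_le_mul_of_nonneg_left (sum_inv_bsqrtb_le X) (by positivity)
      _ = 6 / Real.sqrt y := by ring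
  calc (S.card : ℝ)
      = ∑ q ∈ T, ((S.filter (fun n => (sfA n, sfB n) = q)).card : ℝ) := by
        rw_mod_cast [Finset.card_eq_sum_card_fiberwise hmap]
    _ ≤ ∑ q ∈ T, x * (1 / ((q.1:ℝ)^2 * (q.2:ℝ)^3)) := Finset.sum_le_sum hfib
    _ = x * ∑ q ∈ T, (1:ℝ) / ((q.1:ℝ)^2 * (q.2:ℝ)^3) := by rw [← Finset.mul_sum]
    _ ≤ x * (6 / Real.sqrt y) := mul_le_mul_of_nonneg_left hsum (le_of_lt hx0)
    _ = 6 * x / Real.sqrt y := by ring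
end
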